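/- A coloring (B,W) of the plane contains an (a,b,c)-triangle for every a, b, c > 0 satisfying the (possibly degenerate) triangle inequality with ¬(a = b = c), if and only if there exists a₀ > 0 such that the coloring contains an (a,a,a)-triangle for every a > 0 with a ≠ a₀. -/

import Mathlib

/-- A set of three points is monochromatic for the coloring `(B, Bᶜ)`:
all three points are black (in `B`) or all three are white (in `Bᶜ`). -/
def Mono (B : Set (EuclideanSpace ℝ (Fin 2))) (X Y Z : EuclideanSpace ℝ (Fin 2)) : Prop :=
  (X ∈ B ∧ Y ∈ B ∧ Z ∈ B) ∨ (X ∉ B ∧ Y ∉ B ∧ Z ∉ B)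

/-- The coloring `(B, Bᶜ)` contains an `(a,b,c)`-triangle. -/
def ContainsTriangle (B : Set (EuclideanSpace ℝ (Fin 2))) (a b c : ℝ) : Prop :=
  ∃ X Y Z : EuclideanSpace ℝ (Fin 2),
    Mono B X Y Z ∧ dist X Y = a ∧ dist Y Z = b ∧ dist Z X = c

namespace Stmt3Aux

open Complex

/-- Complex-plane analogue of `Mono`. -/
def MonoC (S : Set ℂ) (X Y Z : ℂ) : Prop :=
  (X ∈ S ∧ Y ∈ S ∧ Z ∈ S) ∨ (X ∉ S ∧ Y ∉ S ∧ Z ∉ S)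

/-- Complex-plane analogue of `ContainsTriangle`. -/
def CTC (S : Set ℂ) (a b c : ℝ) : Prop :=
  ∃ X Y Z : ℂ, MonoC S X Y Z ∧ dist X Y = a ∧ dist Y Z = b ∧ dist Z X = c

lemma monoC_compl {S : Set ℂ} {X Y Z : ℂ} : MonoC Sᶜ X Y Z ↔ MonoC S X Y Z := by
  simp only [MonoC, Set.mem_compl_iff, not_not]
  tauto

lemma monoC_rotate {S : Set ℂ} {X Y Z : ℂ} (h : MonoC S X Y Z) : MonoC S Z X Y := by
  rcases h with ⟨h1, h2, h3⟩ | ⟨h1, h2, h3⟩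
  · exact Or.inl ⟨h3, h1, h2⟩
  · exact Or.inr ⟨h3, h1, h2⟩

lemma abs_eq_of_normSq {w : ℂ} {r : ℝ} (hr : 0 ≤ r) (h : Complex.normSq w = r ^ 2) :
    ‖w‖ = r := by
  rw [Complex.norm_def, h, Real.sqrt_sq hr]

lemma abs_neg' (z : ℂ) : ‖-z‖ = ‖z‖ :=
  norm_neg z

/-- The primitive 6th root of unity `e^{iπ/3}`. -/
noncomputable def mu : ℂ := ((1/2 : ℝ) : ℂ) + ((Real.sqrt 3 / 2 : ℝ) : ℂ) * I

lemma sqrt3_sq : Real.sqrt 3 ^ 2 = 3 := Real.sq_sqrt (by norm_num)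

lemma abs_mu : ‖mu‖ = 1 := by
  apply abs_eq_of_normSq zero_le_one
  rw [mu, Complex.normSq_add_mul_I]
  linear_combination (1/4 : ℝ) * sqrt3_sq

lemma abs_one_sub_mu : ‖1 - mu‖ = 1 := by
  apply abs_eq_of_normSq zero_le_one
  have h : 1 - mu = ((1/2 : ℝ) : ℂ) + ((-(Real.sqrt 3 / 2) : ℝ) : ℂ) * I := by
    rw [mu]; push_cast; ring
  rw [h, Complex.normSq_add_mul_I]
  linear_combination (1/4 : ℝ) * sqrt3_sq

lemma abs_mu_sub_one : ‖mu - 1‖ = 1 := by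
  rw [show mu - 1 = -(1 - mu) by ring, abs_neg', abs_one_sub_mu]

/-- Key lemma A: if the coloring misses monochromatic equilateral triangles of
sides `p` and `q`, then it has no monochromatic `(p,p,q)` triangle. -/
lemma keyA (S : Set ℂ) (p q : ℝ)
    (hp : ∀ X Y Z : ℂ, dist X Y = p → dist Y Z = p → dist Z X = p → ¬ MonoC S X Y Z)
    (hq : ∀ X Y Z : ℂ, dist X Y = q → dist Y Z = q → dist Z X = q → ¬ MonoC S X Y Z)
    (X Y Z : ℂ) (hX : X ∈ S) (hY : Y ∈ S) (hZ : Z ∈ S)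
    (d1 : dist X Y = p) (d2 : dist Y Z = p) (d3 : dist Z X = q) : False := by
  have hu : ‖X - Y‖ = p := by rwa [Complex.dist_eq] at d1
  have hv : ‖Z - Y‖ = p := by
    rw [dist_comm, Complex.dist_eq] at d2; exact d2
  have hvu : ‖(Z - Y) - (X - Y)‖ = q := by
    rw [show (Z - Y) - (X - Y) = Z - X by ring]
    rwa [Complex.dist_eq] at d3
  have huv : ‖(X - Y) - (Z - Y)‖ = q := by
    rw [show (X - Y) - (Z - Y) = -((Z - Y) - (X - Y)) by ring, abs_neg', hvu]
  set u : ℂ := X - Y with hu_def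
  set v : ℂ := Z - Y with hv_def
  -- the five auxiliary points
  set P1 : ℂ := Y + (1 - mu) * v with hP1
  set P2 : ℂ := Y + mu * u with hP2
  set P3 : ℂ := Y + mu * u + (1 - mu) * v with hP3
  set P4 : ℂ := Y + mu * u - mu * v with hP4
  set P5 : ℂ := Y + (1 - mu) * (v - u) with hP5
  -- step 1 : P2 ∉ S
  have hP2n : P2 ∉ S := by
    intro hmem
    refine hp Y X P2 ?_ ?_ ?_ (Or.inl ⟨hY, hX, hmem⟩)
    · rw [dist_comm]; exact d1
    · rw [Complex.dist_eq, show X - P2 = (1 - mu) * u by rw [hP2]; ring,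
        norm_mul, abs_one_sub_mu, hu, one_mul]
    · rw [Complex.dist_eq, show P2 - Y = mu * u by rw [hP2]; ring,
        norm_mul, abs_mu, hu, one_mul]
  -- step 2 : P1 ∉ S
  have hP1n : P1 ∉ S := by
    intro hmem
    refine hp Y Z P1 ?_ ?_ ?_ (Or.inl ⟨hY, hZ, hmem⟩)
    · exact d2
    · rw [Complex.dist_eq, show Z - P1 = mu * v by rw [hP1]; ring,
        norm_mul, abs_mu, hv, one_mul]
    · rw [Complex.dist_eq, show P1 - Y = (1 - mu) * v by rw [hP1]; ring,
        norm_mul, abs_one_sub_mu, hv, one_mul]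
  -- step 3 : P3 ∉ S
  have hP3n : P3 ∉ S := by
    intro hmem
    refine hq X Z P3 ?_ ?_ ?_ (Or.inl ⟨hX, hZ, hmem⟩)
    · rw [dist_comm]; exact d3
    · rw [Complex.dist_eq, show Z - P3 = mu * (v - u) by rw [hP3]; ring,
        norm_mul, abs_mu, one_mul, hvu]
    · rw [Complex.dist_eq, show P3 - X = (1 - mu) * (v - u) by rw [hP3]; ring,
        norm_mul, abs_one_sub_mu, one_mul, hvu]
  -- step 4 : P4 ∈ S
  have hP4y : P4 ∈ S := by
    by_contra hn
    refine hp P2 P3 P4 ?_ ?_ ?_ (Or.inr ⟨hP2n, hP3n, hn⟩)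
    · rw [Complex.dist_eq, show P2 - P3 = (mu - 1) * v by rw [hP2, hP3]; ring,
        norm_mul, abs_mu_sub_one, hv, one_mul]
    · rw [Complex.dist_eq, show P3 - P4 = v by rw [hP3, hP4]; ring, hv]
    · rw [Complex.dist_eq, show P4 - P2 = -(mu * v) by rw [hP4, hP2]; ring,
        abs_neg', norm_mul, abs_mu, hv, one_mul]
  -- step 5 : P5 ∈ S
  have hP5y : P5 ∈ S := by
    by_contra hn
    refine hp P1 P3 P5 ?_ ?_ ?_ (Or.inr ⟨hP1n, hP3n, hn⟩)
    · rw [Complex.dist_eq, show P1 - P3 = -(mu * u) by rw [hP1, hP3]; ring,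
        abs_neg', norm_mul, abs_mu, hu, one_mul]
    · rw [Complex.dist_eq, show P3 - P5 = u by rw [hP3, hP5]; ring, hu]
    · rw [Complex.dist_eq, show P5 - P1 = -((1 - mu) * u) by rw [hP5, hP1]; ring,
        abs_neg', norm_mul, abs_one_sub_mu, hu, one_mul]
  -- final step : Y, P4, P5 form a monochromatic equilateral triangle of side q
  refine hq Y P4 P5 ?_ ?_ ?_ (Or.inl ⟨hY, hP4y, hP5y⟩)
  · rw [Complex.dist_eq, show Y - P4 = -(mu * (u - v)) by rw [hP4]; ring,
      abs_neg', norm_mul, abs_mu, one_mul, huv]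
  · rw [Complex.dist_eq, show P4 - P5 = -(v - u) by rw [hP4, hP5]; ring,
      abs_neg', hvu]
  · rw [Complex.dist_eq, show P5 - Y = (1 - mu) * (v - u) by rw [hP5]; ring,
      norm_mul, abs_one_sub_mu, one_mul, hvu]

/-- Key lemma B: if the coloring has no monochromatic `(a,b,c)` triangle
(where `a, b, c` satisfy the triangle inequality), then it has no
monochromatic equilateral triangle of side `a`. -/
lemma keyB (S : Set ℂ) (a b c : ℝ) (ha : 0 < a) (hb : 0 < b) (hc : 0 < c)
    (hab : a ≤ b + c) (hbc : b ≤ a + c) (hca : c ≤ a + b)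
    (hm : ∀ X Y Z : ℂ, dist X Y = a → dist Y Z = b → dist Z X = c → ¬ MonoC S X Y Z)
    (U V W : ℂ) (hU : U ∈ S) (hV : V ∈ S) (hW : W ∈ S)
    (dUV : dist U V = a) (dVW : dist V W = a) (dWU : dist W U = a) : False := by
  have hu : ‖V - U‖ = a := by
    rw [dist_comm, Complex.dist_eq] at dUV; exact dUV
  have hw : ‖W - U‖ = a := by rwa [Complex.dist_eq] at dWU
  have hwv : ‖W - V‖ = a := by
    rw [dist_comm, Complex.dist_eq] at dVW; exact dVW
  set u : ℂ := V - U with hu_def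
  have hune : u ≠ 0 := by
    intro h
    rw [h] at hu
    simp only [norm_zero] at hu
    exact ne_of_gt ha hu.symm
  set ν : ℂ := (W - U) / u with hν_def
  have hWeq : W = U + u * ν := by
    rw [hν_def]
    field_simp
    ring
  have hVeq : V = U + u := by rw [hu_def]; ring
  have hν : ‖ν‖ = 1 := by
    rw [hν_def, norm_div, hw, hu]
    exact div_self (ne_of_gt ha)
  have hν1 : ‖ν - 1‖ = 1 := by
    have h : ν - 1 = (W - V) / u := by
      rw [hν_def, div_sub_one hune]
      congr 1
      rw [hu_def]; ring
    rw [h, norm_div, hwv, hu]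
    exact div_self (ne_of_gt ha)
  have hν1' : ‖1 - ν‖ = 1 := by
    rw [show (1 : ℂ) - ν = -(ν - 1) by ring, abs_neg', hν1]
  -- construct the apex multiplier ζ with |ζ| = c/a and |ζ - 1| = b/a
  set x : ℝ := (a^2 + c^2 - b^2) / (2*a^2) with hx
  have hkey : 0 ≤ 4*a^2*c^2 - (a^2 + c^2 - b^2)^2 := by
    have hfac : 4*a^2*c^2 - (a^2 + c^2 - b^2)^2
        = ((b - a + c) * (b + a - c)) * ((a + c - b) * (a + c + b)) := by ring
    rw [hfac]
    apply mul_nonneg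
    · apply mul_nonneg <;> linarith
    · apply mul_nonneg <;> linarith
  have hynn : 0 ≤ c^2/a^2 - x^2 := by
    have h4 : c^2/a^2 - x^2 = (4*a^2*c^2 - (a^2 + c^2 - b^2)^2) / (4*a^4) := by
      rw [hx]
      field_simp
      ring
    rw [h4]
    apply div_nonneg hkey
    positivity
  set y : ℝ := Real.sqrt (c^2/a^2 - x^2) with hy
  have hy2 : y^2 = c^2/a^2 - x^2 := Real.sq_sqrt hynn
  set ζ : ℂ := ((x : ℝ) : ℂ) + ((y : ℝ) : ℂ) * I with hζ_def
  have hζ : ‖ζ‖ = c / a := by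
    apply abs_eq_of_normSq (by positivity)
    rw [hζ_def, Complex.normSq_add_mul_I, hy2, div_pow]
    ring
  have hζ1 : ‖ζ - 1‖ = b / a := by
    apply abs_eq_of_normSq (by positivity)
    have h : ζ - 1 = ((x - 1 : ℝ) : ℂ) + ((y : ℝ) : ℂ) * I := by
      rw [hζ_def]; push_cast; ring
    rw [h, Complex.normSq_add_mul_I, hy2, hx]
    field_simp
    ring
  have hζ1' : ‖1 - ζ‖ = b / a := by
    rw [show (1 : ℂ) - ζ = -(ζ - 1) by ring, abs_neg', hζ1]
  have habc : a * (c / a) = c := by field_simp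
  have habb : a * (b / a) = b := by field_simp
  -- auxiliary points
  set N2 : ℂ := U + u * ζ with hN2
  set N4 : ℂ := U + u * (ζ + (1 - ζ) * ν) with hN4
  set N6 : ℂ := U + u * ((1 - ζ) * ν) with hN6
  set N5 : ℂ := U + u * (ζ * (1 - ν)) with hN5
  set N7 : ℂ := U + u * ((ζ - 1) * (1 - ν)) with hN7
  -- step 1 : N2 ∉ S
  have hN2n : N2 ∉ S := by
    intro hmem
    refine hm U V N2 dUV ?_ ?_ (Or.inl ⟨hU, hV, hmem⟩)
    · rw [Complex.dist_eq, show V - N2 = (1 - ζ) * u by rw [hVeq, hN2]; ring,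
        norm_mul, hζ1', hu, mul_comm, habb]
    · rw [Complex.dist_eq, show N2 - U = ζ * u by rw [hN2]; ring,
        norm_mul, hζ, hu, mul_comm, habc]
  -- step 2 : N4 ∉ S
  have hN4n : N4 ∉ S := by
    intro hmem
    refine hm W V N4 ?_ ?_ ?_ (Or.inl ⟨hW, hV, hmem⟩)
    · rw [dist_comm]; exact dVW
    · rw [Complex.dist_eq, show V - N4 = ((1 - ζ) * (1 - ν)) * u by
        rw [hVeq, hN4]; ring, norm_mul, norm_mul, hζ1', hν1', mul_one, hu, mul_comm, habb]
    · rw [Complex.dist_eq, show N4 - W = (ζ * (1 - ν)) * u by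
        rw [hN4, hWeq]; ring, norm_mul, norm_mul, hζ, hν1', mul_one, hu, mul_comm, habc]
  -- step 3 : N6 ∉ S
  have hN6n : N6 ∉ S := by
    intro hmem
    refine hm W U N6 dWU ?_ ?_ (Or.inl ⟨hW, hU, hmem⟩)
    · rw [Complex.dist_eq, show U - N6 = ((ζ - 1) * ν) * u by rw [hN6]; ring,
        norm_mul, norm_mul, hζ1, hν, mul_one, hu, mul_comm, habb]
    · rw [Complex.dist_eq, show N6 - W = -((ζ * ν) * u) by rw [hN6, hWeq]; ring,
        abs_neg', norm_mul, norm_mul, hζ, hν, mul_one, hu, mul_comm, habc]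
  -- step 4 : N5 ∈ S
  have hN5y : N5 ∈ S := by
    by_contra hn
    refine hm N5 N4 N2 ?_ ?_ ?_ (Or.inr ⟨hn, hN4n, hN2n⟩)
    · rw [Complex.dist_eq, show N5 - N4 = -(ν * u) by rw [hN5, hN4]; ring,
        abs_neg', norm_mul, hν, one_mul, hu]
    · rw [Complex.dist_eq, show N4 - N2 = ((1 - ζ) * ν) * u by rw [hN4, hN2]; ring,
        norm_mul, norm_mul, hζ1', hν, mul_one, hu, mul_comm, habb]
    · rw [Complex.dist_eq, show N2 - N5 = ((ζ * ν)) * u by rw [hN2, hN5]; ring,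
        norm_mul, norm_mul, hζ, hν, mul_one, hu, mul_comm, habc]
  -- step 5 : N7 ∈ S
  have hN7y : N7 ∈ S := by
    by_contra hn
    refine hm N4 N7 N6 ?_ ?_ ?_ (Or.inr ⟨hN4n, hn, hN6n⟩)
    · rw [Complex.dist_eq, show N4 - N7 = u by rw [hN4, hN7]; ring, hu]
    · rw [Complex.dist_eq, show N7 - N6 = (ζ - 1) * u by rw [hN7, hN6]; ring,
        norm_mul, hζ1, hu, mul_comm, habb]
    · rw [Complex.dist_eq, show N6 - N4 = -(ζ * u) by rw [hN6, hN4]; ring,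
        abs_neg', norm_mul, hζ, hu, mul_comm, habc]
  -- final step : N5, N7, U form a monochromatic (a,b,c)-triangle
  refine hm N5 N7 U ?_ ?_ ?_ (Or.inl ⟨hN5y, hN7y, hU⟩)
  · rw [Complex.dist_eq, show N5 - N7 = (1 - ν) * u by rw [hN5, hN7]; ring,
      norm_mul, hν1', one_mul, hu]
  · rw [Complex.dist_eq, show N7 - U = ((ζ - 1) * (1 - ν)) * u by rw [hN7]; ring,
      norm_mul, norm_mul, hζ1, hν1', mul_one, hu, mul_comm, habb]
  · rw [Complex.dist_eq, show U - N5 = -((ζ * (1 - ν)) * u) by rw [hN5]; ring,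
      abs_neg', norm_mul, norm_mul, hζ, hν1', mul_one, hu, mul_comm, habc]

/-- An isometric linear equivalence between `ℂ` and the formal Euclidean plane. -/
noncomputable def E : ℂ ≃ₗᵢ[ℝ] EuclideanSpace ℝ (Fin 2) :=
  Complex.isometryOfOrthonormal (EuclideanSpace.basisFun (Fin 2) ℝ)

lemma ct_iff (B : Set (EuclideanSpace ℝ (Fin 2))) (a b c : ℝ) :
    ContainsTriangle B a b c ↔ CTC (⇑E ⁻¹' B) a b c := by
  constructor
  · rintro ⟨X, Y, Z, hmono, hd1, hd2, hd3⟩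
    refine ⟨E.symm X, E.symm Y, E.symm Z, ?_, ?_, ?_, ?_⟩
    · rcases hmono with ⟨h1, h2, h3⟩ | ⟨h1, h2, h3⟩
      · exact Or.inl ⟨by simp [Set.mem_preimage, h1], by simp [Set.mem_preimage, h2],
          by simp [Set.mem_preimage, h3]⟩
      · exact Or.inr ⟨by simp [Set.mem_preimage, h1], by simp [Set.mem_preimage, h2],
          by simp [Set.mem_preimage, h3]⟩
    · rw [LinearIsometryEquiv.dist_map]; exact hd1
    · rw [LinearIsometryEquiv.dist_map]; exact hd2
    · rw [LinearIsometryEquiv.dist_map]; exact hd3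
  · rintro ⟨X, Y, Z, hmono, hd1, hd2, hd3⟩
    refine ⟨E X, E Y, E Z, ?_, ?_, ?_, ?_⟩
    · rcases hmono with ⟨h1, h2, h3⟩ | ⟨h1, h2, h3⟩
      · exact Or.inl ⟨h1, h2, h3⟩
      · exact Or.inr ⟨h1, h2, h3⟩
    · rw [LinearIsometryEquiv.dist_map]; exact hd1
    · rw [LinearIsometryEquiv.dist_map]; exact hd2
    · rw [LinearIsometryEquiv.dist_map]; exact hd3

end Stmt3Aux

open Stmt3Aux

theorem stmt3 (B : Set (EuclideanSpace ℝ (Fin 2))) :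
    (∀ a b c : ℝ, 0 < a → 0 < b → 0 < c → a ≤ b + c → b ≤ a + c → c ≤ a + b →
      ¬(a = b ∧ b = c) → ContainsTriangle B a b c) ↔
    (∃ a₀ : ℝ, 0 < a₀ ∧ ∀ a : ℝ, 0 < a → a ≠ a₀ → ContainsTriangle B a a a) := by
  set S : Set ℂ := ⇑E ⁻¹' B with hS
  constructor
  · -- forward direction
    intro hL
    by_cases hall : ∀ r : ℝ, 0 < r → CTC S r r r
    · exact ⟨1, one_pos, fun a ha _ => (ct_iff B a a a).mpr (hall a ha)⟩
    · push_neg at hall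
      obtain ⟨p, hp0, hpmiss⟩ := hall
      refine ⟨p, hp0, fun a ha hne => ?_⟩
      rw [ct_iff B a a a]
      by_contra hamiss
      -- ∀-forms of the two missing-equilateral hypotheses
      have hp' : ∀ X Y Z : ℂ, dist X Y = p → dist Y Z = p → dist Z X = p →
          ¬ MonoC S X Y Z := fun X Y Z h1 h2 h3 hmm => hpmiss ⟨X, Y, Z, hmm, h1, h2, h3⟩
      have ha' : ∀ X Y Z : ℂ, dist X Y = a → dist Y Z = a → dist Z X = a →
          ¬ MonoC S X Y Z := fun X Y Z h1 h2 h3 hmm => hamiss ⟨X, Y, Z, hmm, h1, h2, h3⟩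
      have hp'c : ∀ X Y Z : ℂ, dist X Y = p → dist Y Z = p → dist Z X = p →
          ¬ MonoC Sᶜ X Y Z := fun X Y Z h1 h2 h3 hmm =>
        hp' X Y Z h1 h2 h3 (monoC_compl.mp hmm)
      have ha'c : ∀ X Y Z : ℂ, dist X Y = a → dist Y Z = a → dist Z X = a →
          ¬ MonoC Sᶜ X Y Z := fun X Y Z h1 h2 h3 hmm =>
        ha' X Y Z h1 h2 h3 (monoC_compl.mp hmm)
      rcases le_or_gt a (2 * p) with hle | hlt
      · -- use a monochromatic (p, p, a) triangle
        have hT := hL p p a hp0 hp0 ha (by linarith) (by linarith) (by linarith)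
          (fun h => hne h.2.symm)
        rw [ct_iff B p p a] at hT
        obtain ⟨X, Y, Z, hmono, hd1, hd2, hd3⟩ := hT
        rcases hmono with ⟨h1, h2, h3⟩ | ⟨h1, h2, h3⟩
        · exact keyA S p a hp' ha' X Y Z h1 h2 h3 hd1 hd2 hd3
        · exact keyA Sᶜ p a hp'c ha'c X Y Z h1 h2 h3 hd1 hd2 hd3
      · -- use a monochromatic (a, a, p) triangle
        have hT := hL a a p ha ha hp0 (by linarith) (by linarith) (by linarith)
          (fun h => hne h.2)
        rw [ct_iff B a a p] at hT
        obtain ⟨X, Y, Z, hmono, hd1, hd2, hd3⟩ := hT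
        rcases hmono with ⟨h1, h2, h3⟩ | ⟨h1, h2, h3⟩
        · exact keyA S a p ha' hp' X Y Z h1 h2 h3 hd1 hd2 hd3
        · exact keyA Sᶜ a p ha'c hp'c X Y Z h1 h2 h3 hd1 hd2 hd3
  · -- backward direction
    rintro ⟨a₀, ha₀, hR⟩ a b c ha hb hc hab hbc hca hne
    rw [ct_iff B a b c]
    by_contra hmiss
    have H : ∀ X Y Z : ℂ, dist X Y = a → dist Y Z = b → dist Z X = c →
        ¬ MonoC S X Y Z := fun X Y Z h1 h2 h3 hmm => hmiss ⟨X, Y, Z, hmm, h1, h2, h3⟩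
    have Hc : ∀ X Y Z : ℂ, dist X Y = a → dist Y Z = b → dist Z X = c →
        ¬ MonoC Sᶜ X Y Z := fun X Y Z h1 h2 h3 hmm =>
      H X Y Z h1 h2 h3 (monoC_compl.mp hmm)
    -- permuted forms
    have Hb : ∀ X Y Z : ℂ, dist X Y = b → dist Y Z = c → dist Z X = a →
        ¬ MonoC S X Y Z := fun X Y Z h1 h2 h3 hmm =>
      H Z X Y h3 h1 h2 (monoC_rotate hmm)
    have Hbc : ∀ X Y Z : ℂ, dist X Y = b → dist Y Z = c → dist Z X = a →
        ¬ MonoC Sᶜ X Y Z := fun X Y Z h1 h2 h3 hmm =>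
      Hb X Y Z h1 h2 h3 (monoC_compl.mp hmm)
    have Hcc : ∀ X Y Z : ℂ, dist X Y = c → dist Y Z = a → dist Z X = b →
        ¬ MonoC S X Y Z := fun X Y Z h1 h2 h3 hmm =>
      H Y Z X h2 h3 h1 (monoC_rotate (monoC_rotate hmm))
    have Hccc : ∀ X Y Z : ℂ, dist X Y = c → dist Y Z = a → dist Z X = b →
        ¬ MonoC Sᶜ X Y Z := fun X Y Z h1 h2 h3 hmm =>
      Hcc X Y Z h1 h2 h3 (monoC_compl.mp hmm)
    -- each of the sizes a, b, c is missing as a monochromatic equilateral side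
    have hma : ¬ CTC S a a a := by
      rintro ⟨U, V, W, hmono, hd1, hd2, hd3⟩
      rcases hmono with ⟨h1, h2, h3⟩ | ⟨h1, h2, h3⟩
      · exact keyB S a b c ha hb hc hab hbc hca H U V W h1 h2 h3 hd1 hd2 hd3
      · exact keyB Sᶜ a b c ha hb hc hab hbc hca Hc U V W h1 h2 h3 hd1 hd2 hd3
    have hmb : ¬ CTC S b b b := by
      rintro ⟨U, V, W, hmono, hd1, hd2, hd3⟩
      rcases hmono with ⟨h1, h2, h3⟩ | ⟨h1, h2, h3⟩
      · exact keyB S b c a hb hc ha (by linarith) (by linarith) (by linarith)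
          Hb U V W h1 h2 h3 hd1 hd2 hd3
      · exact keyB Sᶜ b c a hb hc ha (by linarith) (by linarith) (by linarith)
          Hbc U V W h1 h2 h3 hd1 hd2 hd3
    have hmc : ¬ CTC S c c c := by
      rintro ⟨U, V, W, hmono, hd1, hd2, hd3⟩
      rcases hmono with ⟨h1, h2, h3⟩ | ⟨h1, h2, h3⟩
      · exact keyB S c a b hc ha hb (by linarith) (by linarith) (by linarith)
          Hcc U V W h1 h2 h3 hd1 hd2 hd3
      · exact keyB Sᶜ c a b hc ha hb (by linarith) (by linarith) (by linarith)
          Hccc U V W h1 h2 h3 hd1 hd2 hd3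
    -- but one of a, b, c differs from a₀, contradiction
    rcases ne_or_eq a a₀ with hne_a | heq_a
    · exact hma ((ct_iff B a a a).mp (hR a ha hne_a))
    · rcases ne_or_eq b a₀ with hne_b | heq_b
      · exact hmb ((ct_iff B b b b).mp (hR b hb hne_b))
      · rcases ne_or_eq c a₀ with hne_c | heq_c
        · exact hmc ((ct_iff B c c c).mp (hR c hc hne_c))
        · exact hne ⟨heq_a.trans heq_b.symm, heq_b.trans heq_c.symm⟩
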